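/- An irreducible representation σ of B_n has the property that its restriction to the subgroup S_n ≤ B_n contains a copy of the trivial S_n-representation if and only if σ is isomorphic to one of the representations V_n^i, 0 ≤ i ≤ n (i.e., σ corresponds to the pair of partitions ([n-i],[i]) for some 0 ≤ i ≤ n). -/

import Mathlib

open scoped symmDiff

abbrev Nn (n : ℕ) : Type := Multiplicative (Fin n → ZMod 2)

def permAddEquiv {n : ℕ} (π : Equiv.Perm (Fin n)) : (Fin n → ZMod 2) ≃+ (Fin n → ZMod 2) where
  toFun f := f ∘ π.symm
  invFun f := f ∘ π
  left_inv f := by funext i; simp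
  right_inv f := by funext i; simp
  map_add' f g := rfl

/-- `Sₙ` acting on `(C₂)ⁿ` by permuting coordinates. -/
def permAut (n : ℕ) : Equiv.Perm (Fin n) →* MulAut (Nn n) where
  toFun π := AddEquiv.toMultiplicative (permAddEquiv π)
  map_one' := by ext f; rfl
  map_mul' π ρ := by ext f; rfl

/-- The hyperoctahedral group `Bₙ = (C₂)ⁿ ⋊ Sₙ`. -/
abbrev Bn (n : ℕ) : Type := SemidirectProduct (Nn n) (Equiv.Perm (Fin n)) (permAut n)

/-- the diagonal element `s_A`, with `-1` exactly at positions in `A`. -/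
def sgn {n : ℕ} (A : Finset (Fin n)) : Nn n :=
  Multiplicative.ofAdd (fun i => if i ∈ A then (1 : ZMod 2) else 0)

namespace HypAux

noncomputable def χ {n : ℕ} (A S : Finset (Fin n)) : ℂ := (-1) ^ (A ∩ S).card

lemma χ_comm {n : ℕ} (A S : Finset (Fin n)) : χ A S = χ S A := by
  rw [χ, χ, Finset.inter_comm]

lemma χ_eq_prod {n : ℕ} (A S : Finset (Fin n)) :
    χ A S = ∏ j ∈ S, (if j ∈ A then (-1 : ℂ) else 1) := by
  rw [χ, ← Finset.prod_filter_mul_prod_filter_not S (· ∈ A)]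
  have h1 : ∏ x ∈ S.filter (· ∈ A), (if x ∈ A then (-1 : ℂ) else 1)
      = (-1 : ℂ) ^ (A ∩ S).card := by
    rw [Finset.prod_congr rfl (fun x hx => if_pos (Finset.mem_filter.mp hx).2),
      Finset.prod_const, Finset.filter_mem_eq_inter, Finset.inter_comm]
  have h2 : ∏ x ∈ S.filter (· ∉ A), (if x ∈ A then (-1 : ℂ) else 1) = 1 :=
    Finset.prod_eq_one fun x hx => if_neg (Finset.mem_filter.mp hx).2
  rw [h1, h2, mul_one]

lemma χ_symmDiff {n : ℕ} (A B S : Finset (Fin n)) :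
    χ (A ∆ B) S = χ A S * χ B S := by
  rw [χ_eq_prod, χ_eq_prod, χ_eq_prod, ← Finset.prod_mul_distrib]
  refine Finset.prod_congr rfl fun j _ => ?_
  by_cases hA : j ∈ A <;> by_cases hB : j ∈ B <;>
    simp [Finset.mem_symmDiff, hA, hB]

lemma sum_χ {n : ℕ} (A : Finset (Fin n)) :
    ∑ S : Finset (Fin n), χ A S = if A = ∅ then (2 : ℂ) ^ n else 0 := by
  have key : ∏ j ∈ (Finset.univ : Finset (Fin n)), ((if j ∈ A then (-1 : ℂ) else 1) + 1)
      = ∑ S ∈ (Finset.univ : Finset (Fin n)).powerset,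
          (∏ j ∈ S, (if j ∈ A then (-1 : ℂ) else 1)) * ∏ j ∈ Finset.univ \ S, 1 :=
    Finset.prod_add _ _ _
  simp only [Finset.prod_const_one, mul_one, Finset.powerset_univ] at key
  have : ∑ S : Finset (Fin n), χ A S
      = ∏ j ∈ (Finset.univ : Finset (Fin n)), ((if j ∈ A then (-1 : ℂ) else 1) + 1) := by
    rw [key]; exact Finset.sum_congr rfl fun S _ => χ_eq_prod A S
  rw [this]
  by_cases hA : A = ∅
  · simp only [hA, if_pos]
    norm_num [Finset.card_univ]
  · obtain ⟨a, ha⟩ := Finset.nonempty_iff_ne_empty.mpr hA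
    rw [if_neg hA]
    exact Finset.prod_eq_zero (Finset.mem_univ a) (by rw [if_pos ha]; ring)

lemma sgn_mul {n : ℕ} (A B : Finset (Fin n)) : sgn A * sgn B = sgn (A ∆ B) := by
  show Multiplicative.ofAdd _ * Multiplicative.ofAdd _ = _
  rw [← ofAdd_add]
  unfold sgn
  congr 1
  funext i
  by_cases hA : i ∈ A <;> by_cases hB : i ∈ B <;>
    · simp only [Pi.add_apply, Finset.mem_symmDiff, hA, hB]; simp; try decide

lemma mem_image_equiv {n : ℕ} (π : Equiv.Perm (Fin n)) (A : Finset (Fin n)) (i : Fin n) :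
    i ∈ A.image π ↔ π.symm i ∈ A := by
  rw [Finset.mem_image]
  constructor
  · rintro ⟨a, ha, rfl⟩; simpa
  · intro h; exact ⟨π.symm i, h, by simp⟩

lemma permAut_sgn {n : ℕ} (π : Equiv.Perm (Fin n)) (A : Finset (Fin n)) :
    permAut n π (sgn A) = sgn (A.image π) := by
  show Multiplicative.ofAdd ((fun i => if i ∈ A then (1 : ZMod 2) else 0) ∘ π.symm) = _
  unfold sgn
  congr 1
  funext i
  simp only [Function.comp_apply, mem_image_equiv]

lemma χ_image {n : ℕ} (π : Equiv.Perm (Fin n)) (A S : Finset (Fin n)) :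
    χ (A.image π) (S.image π) = χ A S := by
  rw [χ, χ, ← Finset.image_inter _ _ π.injective,
    Finset.card_image_of_injective _ π.injective]

lemma sgn_empty {n : ℕ} : (sgn (∅ : Finset (Fin n))) = 1 := by
  unfold sgn; simp; rfl

lemma exists_sgn {n : ℕ} (x : Nn n) : ∃ A : Finset (Fin n), sgn A = x := by
  refine ⟨Finset.univ.filter (fun i => x.toAdd i = 1), ?_⟩
  unfold sgn
  apply Multiplicative.toAdd.injective
  funext i
  simp only [toAdd_ofAdd, Finset.mem_filter, Finset.mem_univ, true_and]
  by_cases h : Multiplicative.toAdd x i = 1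
  · rw [if_pos h, h]
  · rw [if_neg h]
    have h2 : ∀ z : ZMod 2, z = 0 ∨ z = 1 := by decide
    rcases h2 (Multiplicative.toAdd x i) with h3 | h3
    · exact h3.symm
    · exact absurd h3 h

end HypAux

namespace HypAux

open SemidirectProduct

def sdEquiv {n : ℕ} (B : Finset (Fin n)) : Finset (Fin n) ≃ Finset (Fin n) :=
  ⟨fun A => B ∆ A, fun A => B ∆ A,
   fun A => symmDiff_symmDiff_cancel_left B A, fun A => symmDiff_symmDiff_cancel_left B A⟩

variable {n : ℕ} {V : Type} [AddCommGroup V] [Module ℂ V] (σ : Representation ℂ (Bn n) V)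

noncomputable def P (S : Finset (Fin n)) : V →ₗ[ℂ] V :=
  ((2:ℂ)^n)⁻¹ • ∑ A : Finset (Fin n), χ A S • σ (SemidirectProduct.inl (sgn A))

lemma P_apply (S : Finset (Fin n)) (v : V) :
    P σ S v = ((2:ℂ)^n)⁻¹ • ∑ A : Finset (Fin n), χ A S • σ (SemidirectProduct.inl (sgn A)) v := by
  simp [P, LinearMap.sum_apply]

lemma χ_mul_self {n : ℕ} (A S : Finset (Fin n)) : χ A S * χ A S = 1 := by
  rw [χ, ← pow_add, ← two_mul, pow_mul]
  norm_num

def imgEquiv {n : ℕ} (π : Equiv.Perm (Fin n)) : Finset (Fin n) ≃ Finset (Fin n) :=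
  ⟨fun A => A.image π, fun A => A.image π.symm,
   fun A => by simp [Finset.image_image], fun A => by simp [Finset.image_image]⟩

lemma sigma_sgn_sgn (B A : Finset (Fin n)) (v : V) :
    σ (inl (sgn B)) (σ (inl (sgn A)) v) = σ (inl (sgn (B ∆ A))) v := by
  rw [← sgn_mul, map_mul, map_mul]
  rfl

lemma sigma_inr_inl (π : Equiv.Perm (Fin n)) (A : Finset (Fin n)) (v : V) :
    σ (inr π) (σ (inl (sgn A)) v) = σ (inl (sgn (A.image π))) (σ (inr π) v) := by
  have hg : (inr π : Bn n) * inl (sgn A) = inl (sgn (A.image π)) * inr π := by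
    rw [← permAut_sgn, inl_aut, mul_assoc, ← map_mul, inv_mul_cancel, map_one, mul_one]
  have h2 := congrArg (fun g : Bn n => σ g v) hg
  simpa [map_mul] using h2

lemma L1 (B S : Finset (Fin n)) (v : V) :
    σ (inl (sgn B)) (P σ S v) = χ B S • P σ S v := by
  rw [P_apply, map_smul, map_sum, smul_comm]
  congr 1
  rw [Finset.smul_sum]
  have : ∀ A : Finset (Fin n), σ (inl (sgn B)) (χ A S • σ (inl (sgn A)) v)
      = χ A S • σ (inl (sgn (B ∆ A))) v := by
    intro A; rw [map_smul, sigma_sgn_sgn]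
  rw [Finset.sum_congr rfl fun A _ => this A]
  rw [← Equiv.sum_comp (sdEquiv B) (fun A => χ B S • (χ A S • σ (inl (sgn A)) v))]
  refine Finset.sum_congr rfl fun A _ => ?_
  show χ A S • σ (inl (sgn (B ∆ A))) v = χ B S • (χ (B ∆ A) S • σ (inl (sgn (B ∆ A))) v)
  rw [smul_smul, χ_symmDiff, ← mul_assoc, χ_mul_self, one_mul]

lemma L2 (π : Equiv.Perm (Fin n)) (S : Finset (Fin n)) (v : V) :
    σ (inr π) (P σ S v) = P σ (S.image π) (σ (inr π) v) := by
  rw [P_apply σ S, P_apply σ (S.image π), map_smul, map_sum]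
  congr 1
  have : ∀ A : Finset (Fin n), σ (inr π) (χ A S • σ (inl (sgn A)) v)
      = χ (A.image π) (S.image π) • σ (inl (sgn (A.image π))) (σ (inr π) v) := by
    intro A; rw [map_smul, sigma_inr_inl, χ_image]
  rw [Finset.sum_congr rfl fun A _ => this A]
  exact Equiv.sum_comp (imgEquiv π) (fun A => χ A (S.image π) • σ (inl (sgn A)) (σ (inr π) v))

lemma L3 (v : V) : ∑ S : Finset (Fin n), P σ S v = v := by
  have h1 : ∑ S : Finset (Fin n), P σ S v
      = ((2:ℂ)^n)⁻¹ • ∑ A : Finset (Fin n), (∑ S : Finset (Fin n), χ A S) • σ (inl (sgn A)) v := by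
    rw [Finset.sum_congr rfl fun S _ => P_apply σ S v, ← Finset.smul_sum, Finset.sum_comm]
    congr 1
    exact Finset.sum_congr rfl fun A _ => (Finset.sum_smul).symm
  rw [h1]
  have h2 : ∀ A : Finset (Fin n), (∑ S : Finset (Fin n), χ A S) • σ (inl (sgn A)) v
      = if A = ∅ then ((2:ℂ)^n) • σ (inl (sgn A)) v else 0 := by
    intro A; rw [sum_χ]; split <;> simp
  rw [Finset.sum_congr rfl fun A _ => h2 A, Finset.sum_ite_eq' Finset.univ (∅ : Finset (Fin n))]
  rw [if_pos (Finset.mem_univ _), sgn_empty, map_one, map_one]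
  rw [smul_smul, inv_mul_cancel₀ (pow_ne_zero _ two_ne_zero), one_smul]
  rfl

lemma L4 (S T : Finset (Fin n)) (w : V) (hw : ∀ B, σ (inl (sgn B)) w = χ B S • w) :
    P σ T w = if T = S then w else 0 := by
  rw [P_apply]
  have : ∀ A : Finset (Fin n), χ A T • σ (inl (sgn A)) w = χ A (T ∆ S) • w := by
    intro A
    rw [hw A, smul_smul, χ_comm A T, χ_comm A (T ∆ S), χ_symmDiff, χ_comm A S]
  rw [Finset.sum_congr rfl fun A _ => this A]
  rw [← Finset.sum_smul]
  rw [Finset.sum_congr rfl fun A _ => χ_comm A (T ∆ S), sum_χ]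
  by_cases h : T = S
  · rw [if_pos (by simp [h]), if_pos h, smul_smul, inv_mul_cancel₀ (pow_ne_zero _ two_ne_zero), one_smul]
  · have hne : T ∆ S ≠ ∅ := by
      rw [← Finset.bot_eq_empty, Ne, symmDiff_eq_bot]; exact h
    rw [if_neg hne, if_neg h, zero_smul, smul_zero]

end HypAux

namespace HypAux

lemma exists_perm_image {n : ℕ} (S A : Finset (Fin n)) (h : S.card = A.card) :
    ∃ π : Equiv.Perm (Fin n), S.image π = A := by
  classical
  have h1 : Fintype.card {x : Fin n // x ∈ S} = Fintype.card {x : Fin n // x ∈ A} := by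
    simp [Fintype.card_coe, h]
  have h2 : Fintype.card {x : Fin n // ¬ x ∈ S} = Fintype.card {x : Fin n // ¬ x ∈ A} := by
    rw [Fintype.card_subtype_compl, Fintype.card_subtype_compl]
    simp [Fintype.card_coe, h]
  let e1 := Fintype.equivOfCardEq h1
  let e2 := Fintype.equivOfCardEq h2
  let π : Equiv.Perm (Fin n) :=
    ((Equiv.sumCompl (· ∈ S)).symm.trans ((e1.sumCongr e2).trans (Equiv.sumCompl (· ∈ A))))
  have hmem : ∀ x ∈ S, π x ∈ A := by
    intro x hx
    show (Equiv.sumCompl (· ∈ A)) ((e1.sumCongr e2) ((Equiv.sumCompl (· ∈ S)).symm x)) ∈ A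
    rw [Equiv.sumCompl_symm_apply_of_pos hx]
    exact (e1 ⟨x, hx⟩).2
  refine ⟨π, ?_⟩
  apply Finset.eq_of_subset_of_card_le
  · intro y hy
    obtain ⟨x, hx, rfl⟩ := Finset.mem_image.mp hy
    exact hmem x hx
  · rw [Finset.card_image_of_injective _ π.injective, h]

def imgEquivSub {n : ℕ} (π : Equiv.Perm (Fin n)) (i : ℕ) :
    {A : Finset (Fin n) // A.card = i} ≃ {A : Finset (Fin n) // A.card = i} :=
  ⟨fun A => ⟨A.1.image π, by rw [Finset.card_image_of_injective _ π.injective]; exact A.2⟩,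
   fun A => ⟨A.1.image π.symm, by rw [Finset.card_image_of_injective _ π.symm.injective]; exact A.2⟩,
   fun A => Subtype.ext (by simp [Finset.image_image]),
   fun A => Subtype.ext (by simp [Finset.image_image])⟩

end HypAux

open HypAux SemidirectProduct in
/-- An irreducible representation σ of Bₙ restricted to Sₙ ≤ Bₙ contains a copy of the
trivial Sₙ-representation (equivalently, has a nonzero Sₙ-invariant vector) iff σ is
isomorphic to one of the representations Vₙⁱ, 0 ≤ i ≤ n (the irrep corresponding to
the pair of partitions ([n-i],[i])). -/
theorem stmt2 (n : ℕ) (V : Type) [AddCommGroup V] [Module ℂ V] [FiniteDimensional ℂ V]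
    [Nontrivial V] (σ : Representation ℂ (Bn n) V)
    (hirr : ∀ W : Submodule ℂ V, (∀ g : Bn n, ∀ v ∈ W, σ g v ∈ W) → W = ⊥ ∨ W = ⊤) :
    (∃ v : V, v ≠ 0 ∧ ∀ π : Equiv.Perm (Fin n), σ (SemidirectProduct.inr π) v = v) ↔
    ∃ i : ℕ, i ≤ n ∧
      ∃ ρ : Representation ℂ (Bn n) ({A : Finset (Fin n) // A.card = i} → ℂ),
        (∀ (π : Equiv.Perm (Fin n)) (A : {A : Finset (Fin n) // A.card = i}),
          ρ (SemidirectProduct.inr π) (Pi.single A 1 : {A : Finset (Fin n) // A.card = i} → ℂ) =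
            (Pi.single (⟨A.1.image π, by
              rw [Finset.card_image_of_injective _ π.injective]; exact A.2⟩ :
              {A : Finset (Fin n) // A.card = i}) 1 : {A : Finset (Fin n) // A.card = i} → ℂ)) ∧
        (∀ (C : Finset (Fin n)) (A : {A : Finset (Fin n) // A.card = i}),
          ρ (SemidirectProduct.inl (sgn C))
              (Pi.single A 1 : {A : Finset (Fin n) // A.card = i} → ℂ) =
            ((-1 : ℂ)) ^ ((C ∩ A.1).card) •
              (Pi.single A 1 : {A : Finset (Fin n) // A.card = i} → ℂ)) ∧
        ∃ e : V ≃ₗ[ℂ] ({A : Finset (Fin n) // A.card = i} → ℂ),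
          ∀ (g : Bn n) (v : V), e (σ g v) = ρ g (e v) := by
  classical
  constructor
  · rintro ⟨v, hv0, hvinv⟩
    obtain ⟨S₀, hS₀⟩ : ∃ S : Finset (Fin n), P σ S v ≠ 0 := by
      by_contra h
      push_neg at h
      exact hv0 (by rw [← L3 σ v]; exact Finset.sum_eq_zero fun S _ => h S)
    set i := S₀.card with hidef
    refine ⟨i, by simpa using Finset.card_le_univ S₀, ?_⟩
    set u : {A : Finset (Fin n) // A.card = i} → V := fun A => P σ A.1 v with hu
    have hP : ∀ (π : Equiv.Perm (Fin n)) (S : Finset (Fin n)),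
        σ (inr π) (P σ S v) = P σ (S.image π) v := by
      intro π S; rw [L2, hvinv]
    have hperm : ∀ (π : Equiv.Perm (Fin n)) (A : {A : Finset (Fin n) // A.card = i}),
        σ (inr π) (u A) = u (imgEquivSub π i A) := fun π A => hP π A.1
    have hune : ∀ A, u A ≠ 0 := by
      intro A
      obtain ⟨π, hπ⟩ := exists_perm_image S₀ A.1 A.2.symm
      have : u A = σ (inr π) (P σ S₀ v) := by rw [hP, hπ]
      rw [this]
      intro hcon
      apply hS₀
      have := congrArg (σ (inr π⁻¹)) hcon
      rwa [← Module.End.mul_apply, ← map_mul, ← map_mul, inv_mul_cancel, map_one, map_one,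
        Module.End.one_apply, map_zero] at this
    have heig : ∀ (A : {A : Finset (Fin n) // A.card = i}) (B : Finset (Fin n)),
        σ (inl (sgn B)) (u A) = χ B A.1 • u A := fun A B => L1 σ B A.1 v
    have hPu : ∀ (T A : {A : Finset (Fin n) // A.card = i}),
        P σ T.1 (u A) = if T = A then u A else 0 := by
      intro T A
      rw [L4 σ A.1 T.1 (u A) (heig A)]
      exact if_congr Subtype.ext_iff.symm rfl rfl
    have hli : LinearIndependent ℂ u := by
      rw [linearIndependent_iff']
      intro s g hsum T hT
      have h1 := congrArg (P σ T.1) hsum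
      rw [map_zero, map_sum] at h1
      rw [Finset.sum_congr rfl (fun A _ => by rw [map_smul, hPu T A, smul_ite, smul_zero])] at h1
      rw [Finset.sum_ite_eq, if_pos hT] at h1
      rcases smul_eq_zero.mp h1 with h | h
      · exact h
      · exact absurd h (hune T)
    have hWinv : ∀ g : Bn n, ∀ w ∈ Submodule.span ℂ (Set.range u),
        σ g w ∈ Submodule.span ℂ (Set.range u) := by
      intro g w hw
      induction hw using Submodule.span_induction with
      | mem x hx =>
        obtain ⟨A, rfl⟩ := hx
        obtain ⟨B, hB⟩ := exists_sgn g.left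
        have hgdec : g = inl g.left * inr g.right := (inl_left_mul_inr_right g).symm
        rw [hgdec, map_mul, Module.End.mul_apply, hperm g.right A, ← hB, heig]
        exact Submodule.smul_mem _ _ (Submodule.subset_span ⟨_, rfl⟩)
      | zero => rw [map_zero]; exact Submodule.zero_mem _
      | add x y hx hy ihx ihy => rw [map_add]; exact Submodule.add_mem _ ihx ihy
      | smul a x hx ih => rw [map_smul]; exact Submodule.smul_mem _ _ ih
    have hsp : ⊤ ≤ Submodule.span ℂ (Set.range u) := by
      rcases hirr _ hWinv with h | h
      · exfalso
        apply hune ⟨S₀, rfl⟩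
        have hm : u ⟨S₀, rfl⟩ ∈ Submodule.span ℂ (Set.range u) :=
          Submodule.subset_span ⟨_, rfl⟩
        rw [h] at hm
        simpa using hm
      · rw [h]
    let b : Module.Basis {A : Finset (Fin n) // A.card = i} ℂ V := Module.Basis.mk hli hsp
    let e : V ≃ₗ[ℂ] ({A : Finset (Fin n) // A.card = i} → ℂ) := b.equivFun
    have heu : ∀ A, e (u A) = Pi.single A 1 := by
      intro A
      funext j
      show b.equivFun (u A) j = _
      rw [← Module.Basis.mk_apply hli hsp A]
      rw [Module.Basis.equivFun_self, Pi.single_apply]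
      exact if_congr eq_comm rfl rfl
    have hsymm : ∀ A, e.symm (Pi.single A 1) = u A := fun A => by
      rw [← heu, LinearEquiv.symm_apply_apply]
    refine ⟨{ toFun := fun g => e.toLinearMap ∘ₗ ((σ g : V →ₗ[ℂ] V) ∘ₗ e.symm.toLinearMap),
              map_one' := ?_, map_mul' := ?_ }, ?_, ?_, e, ?_⟩
    · apply LinearMap.ext; intro w
      simp
    · intro g h
      apply LinearMap.ext; intro w
      simp [map_mul, Module.End.mul_apply]
    · intro π A
      show e (σ (inr π) (e.symm (Pi.single A 1))) = _
      rw [hsymm, hperm, heu]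
      rfl
    · intro C A
      show e (σ (inl (sgn C)) (e.symm (Pi.single A 1))) = _
      rw [hsymm, heig, map_smul, heu]
      rfl
    · intro g w
      have h2 : ∀ x, (e.toLinearMap ∘ₗ ((σ g : V →ₗ[ℂ] V) ∘ₗ e.symm.toLinearMap)) x
          = e (σ g (e.symm x)) := fun x => rfl
      show e (σ g w) = e (σ g (e.symm (e w)))
      rw [LinearEquiv.symm_apply_apply]
  · rintro ⟨i, hi, ρ, hρπ, hρs, e, he⟩
    have hne : Nonempty {A : Finset (Fin n) // A.card = i} := by
      obtain ⟨t, _, ht⟩ := Finset.exists_subset_card_eq (show i ≤ (Finset.univ : Finset (Fin n)).card by simpa using hi)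
      exact ⟨⟨t, ht⟩⟩
    set c : {A : Finset (Fin n) // A.card = i} → ℂ := fun _ => 1 with hc
    refine ⟨e.symm c, ?_, ?_⟩
    · intro h
      have : c = 0 := by
        have := congrArg e h
        rwa [e.apply_symm_apply, map_zero] at this
      obtain ⟨A⟩ := hne
      have := congrFun this A
      simp [hc] at this
    · intro π
      apply e.injective
      rw [he, e.apply_symm_apply]
      have hsum : c = ∑ A : {A : Finset (Fin n) // A.card = i}, Pi.single A 1 := by
        exact (Finset.univ_sum_single c).symm
      rw [hsum, map_sum]
      rw [Finset.sum_congr rfl fun A _ => hρπ π A]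
      exact Equiv.sum_comp (imgEquivSub π i) (fun A => (Pi.single A 1 : _))
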